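/- (Pointwise optimality structure, low-convexity case.) Let P(s,t) = k s^α h₀(t) e^(-δt) with k > 0, α > 0, and δ_h(t) := δ − h₀'(t)/h₀(t). Define for y = n s^α the integrand factor z(y,s,t) = α s^(α−1) g(A y s^(q/2−α)) V(t) − δ_h(t) y. Assume (H2), (H4) with γ̲ ≤ γ(r) on (0,1), α < (1 − (q/2)γ̲)/(1 − γ̲), and δ_h(t) < α γ̲ ξ(t) where ξ(t) = s'(t)/s(t). Then ∂z/∂y > 0 and ∂z/∂s < 0 at every point along the trajectory. -/

import Mathlib

/-- Pointwise optimality structure, low-convexity case. With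
`z(y,s,t) = α s^(α-1) g(A y s^(q/2-α)) V - δ_h y` (where `y = n s^α`), under (H2),
(H4) (`γ(r) ≥ γ̲` and `γ(r) ≤ 1` on `(0,1)`), `α < (1-(q/2)γ̲)/(1-γ̲)` and
`δ_h < α γ̲ ξ` with `ξ = s'/s = (g(r)/n)V/s`, one has `∂z/∂y > 0` and
`∂z/∂s < 0` along the trajectory. -/
theorem stmt18 (g g' : ℝ → ℝ) (A q α γlo δh Vt nn ss : ℝ)
    (hA : 0 < A) (hq1 : 1 < q) (hq2 : q < 2)
    (hgderiv : ∀ r ∈ Set.Ioi (0:ℝ), HasDerivAt g (g' r) r)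
    (hgpos : ∀ r ∈ Set.Ioi (0:ℝ), 0 < g r)
    (hgconc : ConcaveOn ℝ (Set.Ici 0) g)
    (hg0 : g 0 = 0) (hg1 : g 1 = 1)
    (hgr : ∀ r ∈ Set.Ioo (0:ℝ) 1, r ≤ g r)
    (hγlo : 0 < γlo) (hγlo1 : γlo < 1)
    (hγ : ∀ r ∈ Set.Ioo (0:ℝ) 1, γlo ≤ r * g' r / g r ∧ r * g' r / g r ≤ 1)
    (hα : 0 < α) (hαcond : α < (1 - (q / 2) * γlo) / (1 - γlo))
    (hn : 0 < nn) (hs : 0 < ss) (hr : A * nn * ss ^ (q / 2) < 1)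
    (hV : 0 < Vt)
    (hδ : δh < α * γlo * (g (A * nn * ss ^ (q / 2)) / nn * Vt / ss)) :
    (∃ D, 0 < D ∧ HasDerivAt
      (fun y => α * ss ^ (α - 1) * g (A * y * ss ^ (q / 2 - α)) * Vt - δh * y)
      D (nn * ss ^ α))
    ∧ (∃ D, D < 0 ∧ HasDerivAt
      (fun x => α * x ^ (α - 1) * g (A * (nn * ss ^ α) * x ^ (q / 2 - α)) * Vt
        - δh * (nn * ss ^ α)) D ss) := by
  set r : ℝ := A * nn * ss ^ (q / 2) with hrdef
  have hrY : A * (nn * ss ^ α) * ss ^ (q / 2 - α) = r := by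
    rw [hrdef, mul_assoc, mul_assoc, mul_assoc]
    congr 1
    congr 1
    rw [← Real.rpow_add hs]
    ring_nf
  have hrpos : 0 < r := by
    have := Real.rpow_pos_of_pos hs (q/2)
    positivity
  have hrmem : r ∈ Set.Ioo (0:ℝ) 1 := ⟨hrpos, hr⟩
  have hgrpos : 0 < g r := hgpos r hrpos
  have hγr := hγ r hrmem
  constructor
  · -- ∂z/∂y
    have h1 : HasDerivAt (fun y : ℝ => A * y * ss ^ (q/2 - α)) (A * ss ^ (q/2 - α)) (nn * ss ^ α) := by
      simpa using ((hasDerivAt_id (nn * ss ^ α)).const_mul A).mul_const (ss ^ (q/2 - α))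
    have h2 : HasDerivAt (fun y : ℝ => g (A * y * ss ^ (q/2 - α))) (g' r * (A * ss ^ (q/2 - α))) (nn * ss ^ α) := by
      have hg : HasDerivAt g (g' r) (A * (nn * ss ^ α) * ss ^ (q/2 - α)) := by
        rw [hrY]; exact hgderiv r hrpos
      exact HasDerivAt.comp (nn * ss ^ α) hg h1
    have h3 := ((h2.const_mul (α * ss ^ (α-1))).mul_const Vt).sub ((hasDerivAt_id (nn * ss ^ α)).const_mul δh)
    refine ⟨_, ?_, h3⟩
    have ha1 : ss ^ (α-1) = ss ^ α / ss := Real.rpow_sub_one hs.ne' α ▸ rfl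
    have hq : ss ^ (q/2) = ss ^ α * ss ^ (q/2-α) := by
      rw [← Real.rpow_add hs]; ring_nf
    have hrr : r = A * nn * (ss ^ α * ss ^ (q/2-α)) := by rw [hrdef, hq]
    have h5 : γlo * g r ≤ r * g' r := (le_div_iff₀ hgrpos).mp hγr.1
    have h7 : α * γlo * (g r / nn * Vt / ss) ≤ α * ss ^ (α-1) * (g' r * (A * ss ^ (q/2-α))) * Vt := by
      rw [show α * γlo * (g r / nn * Vt / ss) = (γlo * g r) * (α * Vt) / (nn * ss) by
            field_simp,
          show α * ss ^ (α-1) * (g' r * (A * ss ^ (q/2-α))) * Vt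
              = (r * g' r) * (α * Vt) / (nn * ss) by
            rw [ha1, hrr]; field_simp]
      gcongr
    simp only [mul_one]
    linarith
  · -- ∂z/∂s
    have h1 : HasDerivAt (fun x : ℝ => x ^ (α-1)) ((α-1) * ss ^ (α-1-1)) ss :=
      Real.hasDerivAt_rpow_const (Or.inl hs.ne')
    have h2 : HasDerivAt (fun x : ℝ => A * (nn * ss ^ α) * x ^ (q/2-α))
        (A * (nn * ss ^ α) * ((q/2-α) * ss ^ (q/2-α-1))) ss :=
      (Real.hasDerivAt_rpow_const (Or.inl hs.ne')).const_mul _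
    have h3 : HasDerivAt (fun x : ℝ => g (A * (nn * ss ^ α) * x ^ (q/2-α)))
        (g' r * (A * (nn * ss ^ α) * ((q/2-α) * ss ^ (q/2-α-1)))) ss := by
      have hg : HasDerivAt g (g' r) (A * (nn * ss ^ α) * ss ^ (q/2 - α)) := by
        rw [hrY]; exact hgderiv r hrpos
      exact HasDerivAt.comp ss hg h2
    have h4 := (((h1.const_mul α).mul h3).mul_const Vt).sub_const (δh * (nn * ss ^ α))
    refine ⟨_, ?_, h4⟩
    obtain ⟨hγ1, hγ2⟩ := hγr
    have hαc : α * (1 - γlo) < 1 - q/2 * γlo := by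
      have h01 : (0:ℝ) < 1 - γlo := by linarith
      have := (lt_div_iff₀ h01).mp hαcond
      linarith
    have hfac : (α-1) + (q/2-α) * (r * g' r / g r) < 0 := by
      rcases le_or_gt α (q/2) with hc | hc
      · nlinarith [mul_le_mul_of_nonneg_left hγ2 (by linarith : (0:ℝ) ≤ q/2-α)]
      · nlinarith [mul_le_mul_of_nonpos_left hγ1 (by linarith : q/2-α ≤ 0)]
    have hrg : r * g' r = (r * g' r / g r) * g r := by field_simp
    have key : (α-1) * g r + (q/2-α) * (r * g' r) < 0 := by
      have h6 := mul_neg_of_pos_of_neg hgrpos hfac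
      rw [hrg]; nlinarith [h6]
    have ha1 : ss ^ (α-1) = ss ^ α / ss := Real.rpow_sub_one hs.ne' α ▸ rfl
    have ha2 : ss ^ (α-1-1) = ss ^ α / ss / ss := by
      rw [Real.rpow_sub_one hs.ne' (α-1), ha1]
    have hv1 : ss ^ (q/2-α-1) = ss ^ (q/2-α) / ss := Real.rpow_sub_one hs.ne' (q/2-α) ▸ rfl
    have hq : ss ^ (q/2) = ss ^ α * ss ^ (q/2-α) := by
      rw [← Real.rpow_add hs]; ring_nf
    have hrr : r = A * nn * (ss ^ α * ss ^ (q/2-α)) := by rw [hrdef, hq]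
    rw [hrY]
    have hEq : (α * ((α-1) * ss ^ (α-1-1)) * g r
          + α * ss ^ (α-1) * (g' r * (A * (nn * ss ^ α) * ((q/2-α) * ss ^ (q/2-α-1))))) * Vt
        = α * (ss ^ α / ss / ss) * Vt * ((α-1) * g r + (q/2-α) * (r * g' r)) := by
      rw [ha1, ha2, hv1, hrr]; field_simp
    rw [hEq]
    exact mul_neg_of_pos_of_neg (by positivity) key
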